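/- Let L, U : Fin (n+1) → ℝ and define M : Fin (n+1) → ℝ by M k = max (L k) (U k). Then for every DBM D over n clocks, Extra_M(D) i j ≤ Extra_LU(D) i j for all i, j, and consequently ⟦D⟧ ⊆ ⟦Extra_M(D)⟧ ⊆ ⟦Extra_LU(D)⟧. -/
import Mathlib


/-- A DBM over `n` clocks: index `0` is the reference clock. -/
abbrev DBM (n : ℕ) := Fin (n + 1) → Fin (n + 1) → WithTop ℝ

/-- The zone of a DBM. -/
def Zone {n : ℕ} (D : DBM n) : Set (Fin (n + 1) → ℝ) :=
  {v | v 0 = 0 ∧ ∀ i j, ((v i - v j : ℝ) : WithTop ℝ) ≤ D i j}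

/-- The `M`-extrapolation of a DBM. -/
noncomputable def ExtraM {n : ℕ} (M : Fin (n + 1) → ℝ) (D : DBM n) : DBM n := fun i j =>
  if ((M i : ℝ) : WithTop ℝ) < D i j then ⊤
  else if D i j < ((-(M j) : ℝ) : WithTop ℝ) then ((-(M j) : ℝ) : WithTop ℝ)
  else D i j

/-- The `LU`-extrapolation of a DBM (cases tested in order). -/
noncomputable def ExtraLU {n : ℕ} (L U : Fin (n + 1) → ℝ) (D : DBM n) : DBM n := fun i j =>
  if ((L i : ℝ) : WithTop ℝ) < D i j then ⊤
  else if D i j < ((-(U j) : ℝ) : WithTop ℝ) then ((-(U j) : ℝ) : WithTop ℝ)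
  else D i j

/-- with `M k = max (L k) (U k)`, the `LU`-extrapolation is coarser than the
`M`-extrapolation, and `⟦D⟧ ⊆ ⟦Extra_M(D)⟧ ⊆ ⟦Extra_LU(D)⟧`. -/
theorem extraM_le_extraLU_and_zone_subsets {n : ℕ} (L U : Fin (n + 1) → ℝ) (D : DBM n) :
    (∀ i j, ExtraM (fun k => max (L k) (U k)) D i j ≤ ExtraLU L U D i j) ∧
      Zone D ⊆ Zone (ExtraM (fun k => max (L k) (U k)) D) ∧
      Zone (ExtraM (fun k => max (L k) (U k)) D) ⊆ Zone (ExtraLU L U D) := by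
  have hmono : ∀ (A B : DBM n), (∀ i j, A i j ≤ B i j) → Zone A ⊆ Zone B := by
    intro A B h v hv
    exact ⟨hv.1, fun i j => le_trans (hv.2 i j) (h i j)⟩
  have hDM : ∀ i j, D i j ≤ ExtraM (fun k => max (L k) (U k)) D i j := by
    intro i j
    simp only [ExtraM]
    split_ifs with h1 h2
    · exact le_top
    · exact le_of_lt h2
    · exact le_rfl
  have h1 : ∀ i j, ExtraM (fun k => max (L k) (U k)) D i j ≤ ExtraLU L U D i j := by
    intro i j
    have hLM : ((L i : ℝ) : WithTop ℝ) ≤ ((max (L i) (U i) : ℝ) : WithTop ℝ) :=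
      WithTop.coe_le_coe.mpr (le_max_left _ _)
    have hMU : ((-(max (L j) (U j)) : ℝ) : WithTop ℝ) ≤ ((-(U j) : ℝ) : WithTop ℝ) :=
      WithTop.coe_le_coe.mpr (neg_le_neg (le_max_right _ _))
    simp only [ExtraM, ExtraLU]
    split_ifs <;> first
      | exact le_rfl
      | exact le_top
      | exact hMU
      | exact absurd (lt_of_le_of_lt hLM ‹_›) ‹_›
      | exact absurd (lt_of_lt_of_le ‹_› hMU) ‹_›
      | exact le_of_lt ‹_›
  exact ⟨h1, hmono _ _ hDM, hmono _ _ h1⟩
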